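/- Let D ⊆ ℂ, let λ > 0 and let m: ℂ → [0,∞). Let à be a critical random walk loop soup in D with intensity λ (all killing rates zero) and, conditionally on Ã, attach to each loop γ̃ of à an independent mean-one exponential random variable T_γ̃ and delete γ̃ whenever ∑_{i=0}^{|γ̃|−1} m(γ̃(i))² > T_γ̃ (a condition independent of the choice of rooted representative). Then the retained loops form a random walk loop soup in D with intensity λ and killing rates k_x = 4(e^{m(x)²} − 1), i.e. each unrooted lattice loop γ̃ occurs among the retained loops with multiplicity that is Poisson with mean λν^{u,k}_D(γ̃), independently over distinct unrooted loops. -/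

import Mathlib

open MeasureTheory ProbabilityTheory Set
open scoped Classical

noncomputable section

/-- The embedding of the lattice `ℤ²` into `ℂ`. -/
def latToC (p : ℤ × ℤ) : ℂ := (p.1 : ℂ) + (p.2 : ℂ) * Complex.I

/-- Nearest-neighbour adjacency on `ℤ²`. -/
def latAdj (a b : ℤ × ℤ) : Prop := (a.1 - b.1) ^ 2 + (a.2 - b.2) ^ 2 = 1

/-- A rooted lattice loop: a (periodically extended) nearest-neighbour closed path
on `ℤ²` of length `2n > 0`; `pos i` is the vertex visited at time `i`. -/
structure RWRooted where
  n : ℕ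
  pos : ℤ → ℤ × ℤ
  npos : 0 < n
  step : ∀ i : ℤ, latAdj (pos i) (pos (i + 1))
  periodic : ∀ i : ℤ, pos (i + 2 * n) = pos i

/-- Time-shift equivalence of rooted lattice loops. -/
def rwSetoid : Setoid RWRooted where
  r a b := a.n = b.n ∧ ∃ u : ℤ, ∀ i, b.pos i = a.pos (u + i)
  iseqv := by
    constructor
    · exact fun r => ⟨rfl, 0, fun i => by simp⟩
    · rintro a b ⟨hn, u, hu⟩
      refine ⟨hn.symm, -u, fun i => ?_⟩
      rw [hu (-u + i), show u + (-u + i) = i by ring]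
    · rintro a b c ⟨hn, u, hu⟩ ⟨hn', u', hu'⟩
      refine ⟨hn.trans hn', u + u', fun i => ?_⟩
      rw [hu' i, hu (u' + i), show u + (u' + i) = u + u' + i by ring]

/-- Unrooted lattice loops: equivalence classes of rooted lattice loops under
time shifts. -/
abbrev RWLoop : Type := Quotient rwSetoid

/-- The length (number of steps) `2n` of an unrooted lattice loop. -/
def rwLen (γ : RWLoop) : ℕ := 2 * γ.out.n

/-- The weight of a rooted lattice loop for the rooted random walk loop measure
`ν^{r,k}_D` with killing rates `k`:
`|γ̃|⁻¹ ∏_i p_{x_i, x_{i+1}}` if all vertices lie in `D`, and `0` otherwise. -/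
def rwWeight (k : ℤ × ℤ → ℝ) (D : Set ℂ) (r : RWRooted) : ℝ :=
  (if ∀ i : ℤ, latToC (r.pos i) ∈ D then (1:ℝ) else 0) * (1 / (2 * r.n)) *
    ∏ i ∈ Finset.range (2 * r.n), (k (r.pos (i : ℤ)) + 4)⁻¹

/-- The unrooted random walk loop measure `ν^{u,k}_D(γ̃)`: the sum of the rooted weights
of the (finitely many, equally weighted) rooted representatives of `γ̃`. -/
def nuU (k : ℤ × ℤ → ℝ) (D : Set ℂ) (γ : RWLoop) : ℝ :=
  (Nat.card {r : RWRooted // rwSetoid.r r γ.out}) * rwWeight k D γ.out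

/-- The number of visits `n(x, γ̃)` of the unrooted lattice loop `γ̃` to the vertex `x`. -/
def visitCount (x : ℤ × ℤ) (γ : RWLoop) : ℕ :=
  ((Finset.range (2 * γ.out.n)).filter fun i => γ.out.pos (i : ℤ) = x).card

/-- The killing rates `k_x = 4(e^{m(x)²} - 1)` associated with a mass function `m`. -/
def kOf (m : ℂ → ℝ) (x : ℤ × ℤ) : ℝ := 4 * (Real.exp ((m (latToC x)) ^ 2) - 1)

/-- `∑_{i=0}^{|γ̃|-1} m(γ̃(i))²` for an unrooted lattice loop `γ̃`. -/
def killSum (m : ℂ → ℝ) (γ : RWLoop) : ℝ :=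
  ∑ i ∈ Finset.range (2 * γ.out.n), (m (latToC (γ.out.pos (i : ℤ)))) ^ 2

/-- The Poisson distribution on `ℕ` with (real, nonnegative) mean `r`. -/
def poissonNat (r : ℝ) : Measure ℕ := poissonMeasure r.toNNReal

/-- `IsRWSoup P N λ k D` : under `P`, the multiplicities `N γ̃` form a random walk loop
soup in `D` with intensity `λ` and killing rates `k`, i.e. they are independent Poisson
random variables with means `λ ν^{u,k}_D(γ̃)`. -/
def IsRWSoup {Ω : Type} [MeasurableSpace Ω] (P : Measure Ω) (Nl : RWLoop → Ω → ℕ)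
    (lam : ℝ) (k : ℤ × ℤ → ℝ) (D : Set ℂ) : Prop :=
  iIndepFun (m := fun _ => inferInstance) Nl P ∧
  ∀ γ, Measure.map (Nl γ) P = poissonNat (lam * nuU k D γ)

end

noncomputable section

lemma myIIndep_mono {Ω' ι : Type*} {mΩ : MeasurableSpace Ω'} {μ : Measure Ω'}
    {m m' : ι → MeasurableSpace Ω'} (h : iIndep m' μ) (hle : ∀ i, m i ≤ m' i) :
    iIndep m μ := by
  rw [iIndep_iff] at h ⊢
  exact fun s f hf => h s fun i hi => hle i _ (hf i hi)

lemma myIIndep_grouped {Ω' ι κ : Type*} {mΩ : MeasurableSpace Ω'} {μ : Measure Ω'}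
    [IsProbabilityMeasure μ] {m : ι → MeasurableSpace Ω'}
    (h_le : ∀ i, m i ≤ mΩ) (h : iIndep m μ) (q : ι → κ) :
    iIndep (fun j => ⨆ i ∈ q ⁻¹' {j}, m i) μ := by
  rw [iIndep_iff]
  intro s f
  induction s using Finset.induction_on with
  | empty => intro _; simp
  | @insert j s hj ih =>
    intro hf
    rw [Finset.set_biInter_insert, Finset.prod_insert hj,
      ← ih fun i hi => hf i (Finset.mem_insert_of_mem hi)]
    have hdisj : Disjoint (q ⁻¹' {j}) (q ⁻¹' ↑s) := by
      refine Set.disjoint_left.mpr fun i hi1 hi2 => ?_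
      simp only [Set.mem_preimage, Set.mem_singleton_iff] at hi1 hi2
      rw [hi1] at hi2
      exact hj hi2
    have hind : Indep (⨆ i ∈ q ⁻¹' {j}, m i) (⨆ i ∈ q ⁻¹' (↑s : Set κ), m i) μ :=
      indep_iSup_of_disjoint h_le h hdisj
    refine (Indep_iff _ _ _).mp hind _ _ (hf j (Finset.mem_insert_self _ _)) ?_
    refine MeasurableSet.biInter s.countable_toSet fun j' hj' => ?_
    have hle : (⨆ i ∈ q ⁻¹' {j'}, m i) ≤ ⨆ i ∈ q ⁻¹' (↑s : Set κ), m i := by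
      refine biSup_mono fun i (hi : q i ∈ ({j'} : Set κ)) => ?_
      simp only [Set.mem_singleton_iff] at hi
      rw [Set.mem_preimage, hi]
      exact_mod_cast hj'
    exact hle _ (hf j' (Finset.mem_insert_of_mem hj'))

lemma measurable_cardFilter {Ω' : Type*} {mΩ : MeasurableSpace Ω'} (s : ℝ) (T : ℕ → Ω' → ℝ)
    (hT : ∀ c, Measurable (T c)) (n : ℕ) :
    Measurable fun ω => ((Finset.range n).filter fun c => s ≤ T c ω).card := by
  have heq : (fun ω => ((Finset.range n).filter fun c => s ≤ T c ω).card)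
      = fun ω => ∑ c ∈ Finset.range n, if s ≤ T c ω then 1 else 0 := by
    funext ω; rw [Finset.card_filter]
  rw [heq]
  exact Finset.measurable_sum _ fun c _ =>
    Measurable.ite (measurableSet_le measurable_const (hT c)) measurable_const measurable_const

lemma measurable_cardFilterRand {Ω' : Type*} {mΩ : MeasurableSpace Ω'} (s : ℝ) (N : Ω' → ℕ)
    (T : ℕ → Ω' → ℝ) (hN : Measurable N) (hT : ∀ c, Measurable (T c)) :
    Measurable fun ω => ((Finset.range (N ω)).filter fun c => s ≤ T c ω).card := by
  intro t ht
  have heq : (fun ω => ((Finset.range (N ω)).filter fun c => s ≤ T c ω).card) ⁻¹' t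
      = ⋃ n : ℕ, N ⁻¹' {n} ∩
          (fun ω => ((Finset.range n).filter fun c => s ≤ T c ω).card) ⁻¹' t := by
    ext ω
    simp only [Set.mem_iUnion, Set.mem_inter_iff, Set.mem_preimage, Set.mem_singleton_iff]
    constructor
    · exact fun h => ⟨N ω, rfl, h⟩
    · rintro ⟨n, rfl, h⟩; exact h
  rw [heq]
  exact MeasurableSet.iUnion fun n =>
    (hN (measurableSet_singleton n)).inter (measurable_cardFilter s T hT n ht)

lemma expMeasure_Ici {s : ℝ} (hs : 0 ≤ s) :
    expMeasure 1 (Set.Ici s) = ENNReal.ofReal (Real.exp (-s)) := by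
  rw [expMeasure, gammaMeasure, withDensity_apply _ measurableSet_Ici]
  have h1 : ∫⁻ x in Ici s, gammaPDF 1 1 x = ∫⁻ x in Ici s, ENNReal.ofReal (Real.exp (-x)) := by
    refine setLIntegral_congr_fun measurableSet_Ici (fun x hx => ?_)
    rw [gammaPDF_of_nonneg (hs.trans hx)]
    simp [Real.Gamma_one]
  rw [h1, ← MeasureTheory.Measure.restrict_congr_set Ioi_ae_eq_Ici]
  have hint : IntegrableOn (fun x => Real.exp (-x)) (Ioi s) := by
    simpa using exp_neg_integrableOn_Ioi s (by norm_num : (0:ℝ) < 1)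
  rw [← MeasureTheory.ofReal_integral_eq_lintegral_ofReal hint
    (ae_of_all _ fun x => (Real.exp_pos _).le), integral_exp_neg_Ioi]

lemma expMeasure_Iio {s : ℝ} (hs : 0 ≤ s) :
    expMeasure 1 (Set.Iio s) = ENNReal.ofReal (1 - Real.exp (-s)) := by
  have hprob : IsProbabilityMeasure (expMeasure 1) := isProbabilityMeasure_expMeasure one_pos
  have h := measure_compl (μ := expMeasure 1) (s := Set.Ici s) measurableSet_Ici (measure_ne_top _ _)
  rw [compl_Ici] at h
  rw [h, expMeasure_Ici hs, measure_univ, ← ENNReal.ofReal_one,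
    ← ENNReal.ofReal_sub _ (Real.exp_nonneg _)]


lemma poisson_thin_hasSum (r p : ℝ) (hr : 0 ≤ r) (hp0 : 0 ≤ p) (hp1 : p ≤ 1) (j : ℕ) :
    HasSum (fun n : ℕ => (n.choose j : ℝ) * (Real.exp (-r) * r ^ n / n.factorial) *
        (p ^ j * (1 - p) ^ (n - j)))
      (Real.exp (-(p * r)) * (p * r) ^ j / j.factorial) := by
  set q : ℝ := 1 - p with hq
  set f : ℕ → ℝ := fun n => (n.choose j : ℝ) * (Real.exp (-r) * r ^ n / n.factorial) *
      (p ^ j * q ^ (n - j)) with hf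
  set C : ℝ := Real.exp (-r) * p ^ j * r ^ j / j.factorial with hC
  have hinj : Function.Injective fun d : ℕ => j + d := fun a b h => by simpa using h
  have hzero : ∀ n ∉ Set.range (fun d : ℕ => j + d), f n = 0 := by
    intro n hn
    have hlt : n < j := by
      by_contra h'
      exact hn ⟨n - j, by simp; omega⟩
    simp [hf, Nat.choose_eq_zero_of_lt hlt]
  have key : ∀ d : ℕ, f (j + d) = C * ((q * r) ^ d / d.factorial) := by
    intro d
    have hcnat : (j + d).choose j * (d.factorial * j.factorial) = (j + d).factorial := by
      have h1 := Nat.add_choose_mul_factorial_mul_factorial d j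
      rw [Nat.add_comm d j] at h1
      rw [← h1]; ring
    have hcast : ((j + d).choose j : ℝ) = ((j + d).factorial : ℝ) /
        (d.factorial * j.factorial) := by
      rw [eq_div_iff (by positivity)]
      exact_mod_cast hcnat
    have hds : j + d - j = d := by omega
    rw [hf, hC]
    simp only [hds]
    rw [hcast, pow_add, mul_pow]
    have h1 : ((j + d).factorial : ℝ) ≠ 0 := by positivity
    have h2 : (d.factorial : ℝ) ≠ 0 := by positivity
    have h3 : (j.factorial : ℝ) ≠ 0 := by positivity
    field_simp
  have hexp : HasSum (fun d : ℕ => C * ((q * r) ^ d / d.factorial)) (C * Real.exp (q * r)) := by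
    rw [Real.exp_eq_exp_ℝ]
    exact (NormedSpace.expSeries_div_hasSum_exp (q * r)).mul_left C
  have hcomp : HasSum (f ∘ fun d : ℕ => j + d) (C * Real.exp (q * r)) := by
    rw [show (f ∘ fun d : ℕ => j + d) = fun d : ℕ => C * ((q * r) ^ d / d.factorial)
      from funext key]
    exact hexp
  have hfs : HasSum f (C * Real.exp (q * r)) := (hinj.hasSum_iff hzero).mp hcomp
  have hval : C * Real.exp (q * r) = Real.exp (-(p * r)) * (p * r) ^ j / j.factorial := by
    have hee : Real.exp (-(p * r)) = Real.exp (-r) * Real.exp (q * r) := by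
      rw [← Real.exp_add]; congr 1; rw [hq]; ring
    rw [hee, hC, mul_pow]; ring
  rw [← hval]
  exact hfs

end

noncomputable section

/-- Index type for the joint family consisting of the loop multiplicities and the
exponential marks attached to the individual loop occurrences. -/
def mixβ : RWLoop ⊕ RWLoop × ℕ → Type
  | Sum.inl _ => ℕ
  | Sum.inr _ => ℝ

/-- The measurable structures on the members of the joint family. -/
def mixMS : ∀ i, MeasurableSpace (mixβ i)
  | Sum.inl _ => (inferInstance : MeasurableSpace ℕ)
  | Sum.inr _ => (inferInstance : MeasurableSpace ℝ)

/-- The joint family: multiplicities `N γ̃` and exponential marks `T γ̃ c` (one for each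
copy `c` of each loop `γ̃`). -/
def mixF {Ω : Type} (Nl : RWLoop → Ω → ℕ) (T : RWLoop → ℕ → Ω → ℝ) : ∀ i, Ω → mixβ i
  | Sum.inl γ => Nl γ
  | Sum.inr p => T p.1 p.2


noncomputable section

/-- Sets used for the independence computation: the value `n` for the multiplicity
coordinate and survival/death intervals for the mark coordinates. -/
def thinSets (n : ℕ) (s : ℝ) (A : Finset ℕ) : ∀ i, Set (mixβ i)
  | Sum.inl _ => ({n} : Set ℕ)
  | Sum.inr pr => if pr.2 ∈ A then (Set.Ici s : Set ℝ) else (Set.Iio s : Set ℝ)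

lemma killSum_nonneg (m : ℂ → ℝ) (γ : RWLoop) : 0 ≤ killSum m γ :=
  Finset.sum_nonneg fun _ _ => sq_nonneg _

lemma rwWeight_zero_nonneg (D : Set ℂ) (r : RWRooted) : 0 ≤ rwWeight (fun _ => 0) D r := by
  unfold rwWeight
  refine mul_nonneg (mul_nonneg ?_ ?_) ?_
  · split <;> norm_num
  · positivity
  · exact Finset.prod_nonneg fun i _ => by norm_num

lemma nuU_zero_nonneg (D : Set ℂ) (γ : RWLoop) : 0 ≤ nuU (fun _ => 0) D γ :=
  mul_nonneg (Nat.cast_nonneg _) (rwWeight_zero_nonneg D γ.out)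

lemma rwWeight_kOf (m : ℂ → ℝ) (D : Set ℂ) (r : RWRooted) :
    rwWeight (kOf m) D r =
      Real.exp (-(∑ i ∈ Finset.range (2 * r.n), (m (latToC (r.pos (i : ℤ)))) ^ 2)) *
        rwWeight (fun _ => 0) D r := by
  unfold rwWeight
  have hprod : ∏ i ∈ Finset.range (2 * r.n), (kOf m (r.pos (i : ℤ)) + 4)⁻¹ =
      Real.exp (-(∑ i ∈ Finset.range (2 * r.n), (m (latToC (r.pos (i : ℤ)))) ^ 2)) *
        ∏ i ∈ Finset.range (2 * r.n), ((fun _ : ℤ × ℤ => (0:ℝ)) (r.pos (i : ℤ)) + 4)⁻¹ := by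
    calc ∏ i ∈ Finset.range (2 * r.n), (kOf m (r.pos (i : ℤ)) + 4)⁻¹
        = ∏ i ∈ Finset.range (2 * r.n),
            (Real.exp (-((m (latToC (r.pos (i : ℤ)))) ^ 2)) * (4:ℝ)⁻¹) := by
          refine Finset.prod_congr rfl fun i _ => ?_
          rw [kOf, show (4:ℝ) * (Real.exp ((m (latToC (r.pos (i : ℤ)))) ^ 2) - 1) + 4 =
            4 * Real.exp ((m (latToC (r.pos (i : ℤ)))) ^ 2) from by ring, mul_inv,
            ← Real.exp_neg]
          ring
      _ = (∏ i ∈ Finset.range (2 * r.n), Real.exp (-((m (latToC (r.pos (i : ℤ)))) ^ 2))) *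
            ∏ _i ∈ Finset.range (2 * r.n), (4:ℝ)⁻¹ := Finset.prod_mul_distrib
      _ = Real.exp (-(∑ i ∈ Finset.range (2 * r.n), (m (latToC (r.pos (i : ℤ)))) ^ 2)) *
            ∏ i ∈ Finset.range (2 * r.n), ((fun _ : ℤ × ℤ => (0:ℝ)) (r.pos (i : ℤ)) + 4)⁻¹ := by
          congr 1
          · rw [← Finset.sum_neg_distrib, Real.exp_sum]
          · exact Finset.prod_congr rfl fun i _ => by norm_num
  rw [hprod]
  ring

lemma nuU_kOf (m : ℂ → ℝ) (D : Set ℂ) (γ : RWLoop) :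
    nuU (kOf m) D γ = Real.exp (-(killSum m γ)) * nuU (fun _ => 0) D γ := by
  unfold nuU killSum
  rw [rwWeight_kOf]
  ring

end

/-- Thinning a critical random walk loop soup in `D` with intensity `λ`
by attaching to each loop occurrence `γ̃` an independent mean-one exponential variable
`T_γ̃` and deleting it whenever `∑_{i<|γ̃|} m(γ̃(i))² > T_γ̃` produces a random walk loop
soup in `D` with intensity `λ` and killing rates `k_x = 4(e^{m(x)²} - 1)`. -/
theorem rw_massive_soup_from_critical_thinning
    (D : Set ℂ) (lam : ℝ) (hlam : 0 < lam)
    (m : ℂ → ℝ) (hm0 : ∀ z, 0 ≤ m z)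
    {Ω : Type} [MeasurableSpace Ω] (P : Measure Ω) [IsProbabilityMeasure P]
    (Nl : RWLoop → Ω → ℕ) (T : RWLoop → ℕ → Ω → ℝ)
    (hmeas : ∀ γ, Measurable (Nl γ)) (hmeasT : ∀ γ c, Measurable (T γ c))
    (hjoint : iIndepFun (m := mixMS) (mixF Nl T) P)
    (hN : ∀ γ, Measure.map (Nl γ) P = poissonNat (lam * nuU (fun _ => 0) D γ))
    (hT : ∀ γ c, Measure.map (T γ c) P = expMeasure 1) :
    IsRWSoup P
      (fun γ ω => ((Finset.range (Nl γ ω)).filter fun c => killSum m γ ≤ T γ c ω).card)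
      lam (kOf m) D := by
  classical
  have hmixmeas : ∀ i, @Measurable Ω (mixβ i) _ (mixMS i) (mixF Nl T i) := by
    rintro (γ | ⟨γ, c⟩)
    · exact hmeas γ
    · exact hmeasT γ c
  constructor
  · -- independence of the thinned multiplicities
    have hgrp := myIIndep_grouped (m := fun i => (mixMS i).comap (mixF Nl T i))
        (fun i => (hmixmeas i).comap_le) hjoint.iIndep (Sum.elim id Prod.fst)
    rw [iIndepFun_iff_iIndep]
    refine myIIndep_mono hgrp fun γ => ?_
    rw [← measurable_iff_comap_le]
    refine measurable_cardFilterRand (killSum m γ) (Nl γ) (fun c => T γ c) ?_ fun c => ?_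
    · exact measurable_iff_comap_le.mpr
        (le_biSup (fun i => (mixMS i).comap (mixF Nl T i))
          (show Sum.inl γ ∈ Sum.elim id Prod.fst ⁻¹' {γ} from rfl))
    · exact measurable_iff_comap_le.mpr
        (le_biSup (fun i => (mixMS i).comap (mixF Nl T i))
          (show Sum.inr (γ, c) ∈ Sum.elim id Prod.fst ⁻¹' {γ} from rfl))
  · -- distribution of each thinned multiplicity
    intro γ
    have hs0 : 0 ≤ killSum m γ := killSum_nonneg m γ
    set p : ℝ := Real.exp (-killSum m γ) with hpdef
    have hp0 : 0 ≤ p := (Real.exp_pos _).le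
    have hp1 : p ≤ 1 := Real.exp_le_one_iff.mpr (neg_nonpos.mpr hs0)
    have h1p : 0 ≤ 1 - p := by linarith
    set μ0 : ℝ := lam * nuU (fun _ => 0) D γ with hmu0
    have hμ0 : 0 ≤ μ0 := mul_nonneg hlam.le (nuU_zero_nonneg D γ)
    have hrate : lam * nuU (kOf m) D γ = p * μ0 := by
      rw [nuU_kOf m D γ, hpdef, hmu0]; ring
    have hsingle : ∀ (x : ℝ), 0 ≤ x → ∀ k : ℕ,
        poissonNat x {k} = ENNReal.ofReal (Real.exp (-x) * x ^ k / k.factorial) := by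
      intro x hx k
      rw [poissonNat, poissonMeasure_singleton]
      rw [Real.coe_toNNReal _ hx]
    refine Measure.ext_of_singleton fun j => ?_
    have hMmeas : Measurable fun ω =>
        ((Finset.range (Nl γ ω)).filter fun c => killSum m γ ≤ T γ c ω).card :=
      measurable_cardFilterRand _ (Nl γ) (fun c => T γ c) (hmeas γ) fun c => hmeasT γ c
    rw [Measure.map_apply hMmeas (measurableSet_singleton j),
      hsingle _ (by rw [hrate]; exact mul_nonneg hp0 hμ0) j, hrate]
    set f : ℕ → ℝ := fun n => (n.choose j : ℝ) * (Real.exp (-μ0) * μ0 ^ n / n.factorial) *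
        (p ^ j * (1 - p) ^ (n - j)) with hfdef
    set g : ℕ → Ω → ℕ :=
      fun n ω => ((Finset.range n).filter fun c => killSum m γ ≤ T γ c ω).card with hgdef
    have hgmeas : ∀ n, Measurable (g n) :=
      fun n => measurable_cardFilter _ _ (fun c => hmeasT γ c) n
    have hdecomp : (fun ω =>
          ((Finset.range (Nl γ ω)).filter fun c => killSum m γ ≤ T γ c ω).card) ⁻¹' {j}
        = ⋃ n : ℕ, (Nl γ ⁻¹' {n} ∩ g n ⁻¹' {j}) := by
      ext ω
      simp only [Set.mem_preimage, Set.mem_singleton_iff, Set.mem_iUnion, Set.mem_inter_iff,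
        hgdef]
      constructor
      · exact fun h => ⟨Nl γ ω, rfl, h⟩
      · rintro ⟨n, rfl, h⟩; exact h
    have hdisj : Pairwise (Function.onFun Disjoint fun n => Nl γ ⁻¹' {n} ∩ g n ⁻¹' {j}) := by
      intro a b hab
      refine Set.disjoint_left.mpr ?_
      rintro ω ⟨ha, -⟩ ⟨hb, -⟩
      simp only [Set.mem_preimage, Set.mem_singleton_iff] at ha hb
      exact hab (ha.symm.trans hb)
    have hmeasE : ∀ n, MeasurableSet (Nl γ ⁻¹' {n} ∩ g n ⁻¹' {j}) :=
      fun n => (hmeas γ (measurableSet_singleton n)).inter (hgmeas n (measurableSet_singleton j))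
    rw [hdecomp, measure_iUnion hdisj hmeasE]
    have hstep : ∀ n : ℕ, P (Nl γ ⁻¹' {n} ∩ g n ⁻¹' {j}) = ENNReal.ofReal (f n) := by
      intro n
      set 𝒜 : Finset (Finset ℕ) := Finset.powersetCard j (Finset.range n) with hAdef
      set S : Finset (RWLoop ⊕ RWLoop × ℕ) :=
        insert (Sum.inl γ) ((Finset.range n).image fun c => Sum.inr (γ, c)) with hSdef
      have hinotin : (Sum.inl γ : RWLoop ⊕ RWLoop × ℕ)
          ∉ (Finset.range n).image fun c => Sum.inr (γ, c) := by simp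
      have hunion : Nl γ ⁻¹' {n} ∩ g n ⁻¹' {j} =
          ⋃ A ∈ 𝒜, (Nl γ ⁻¹' {n} ∩
            {ω | (Finset.range n).filter (fun c => killSum m γ ≤ T γ c ω) = A}) := by
        ext ω
        simp only [Set.mem_inter_iff, Set.mem_preimage, Set.mem_singleton_iff, Set.mem_iUnion,
          Set.mem_setOf_eq, hgdef, hAdef, Finset.mem_powersetCard]
        constructor
        · rintro ⟨h1, h2⟩
          exact ⟨_, ⟨Finset.filter_subset _ _, h2⟩, h1, rfl⟩
        · rintro ⟨A, ⟨hsub, hcard⟩, h1, h2⟩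
          exact ⟨h1, by rw [h2, hcard]⟩
      have hinterA : ∀ A ∈ 𝒜,
          (Nl γ ⁻¹' {n} ∩
            {ω | (Finset.range n).filter (fun c => killSum m γ ≤ T γ c ω) = A})
          = ⋂ i ∈ S, mixF Nl T i ⁻¹' thinSets n (killSum m γ) A i := by
        intro A hAmem
        obtain ⟨hsub, hcard⟩ := Finset.mem_powersetCard.mp (hAdef ▸ hAmem)
        rw [hSdef, Finset.set_biInter_insert, Finset.set_biInter_finset_image]
        ext ω
        simp only [Set.mem_inter_iff, Set.mem_preimage, Set.mem_singleton_iff, Set.mem_setOf_eq,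
          Set.mem_iInter, mixF, thinSets]
        refine and_congr_right fun _ => ?_
        constructor
        · intro hF c hc
          by_cases hcA : c ∈ A
          · show T γ c ω ∈ (if c ∈ A then Set.Ici (killSum m γ) else Set.Iio (killSum m γ) : Set ℝ)
            rw [if_pos hcA]
            rw [← hF] at hcA
            exact (Finset.mem_filter.mp hcA).2
          · show T γ c ω ∈ (if c ∈ A then Set.Ici (killSum m γ) else Set.Iio (killSum m γ) : Set ℝ)
            rw [if_neg hcA]
            by_contra hcon
            exact hcA (hF ▸ Finset.mem_filter.mpr ⟨hc, not_lt.mp hcon⟩)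
        · intro h
          refine Finset.ext fun c => ⟨fun hcF => ?_, fun hcA => ?_⟩
          · obtain ⟨hcr, hcs⟩ := Finset.mem_filter.mp hcF
            by_contra hcA
            have hlt := h c hcr
            change T γ c ω ∈ (if c ∈ A then Set.Ici (killSum m γ) else Set.Iio (killSum m γ) : Set ℝ) at hlt
            rw [if_neg hcA] at hlt
            exact absurd hcs (not_le.mpr hlt)
          · have hcr := hsub hcA
            have hge := h c hcr
            change T γ c ω ∈ (if c ∈ A then Set.Ici (killSum m γ) else Set.Iio (killSum m γ) : Set ℝ) at hge
            rw [if_pos hcA] at hge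
            exact Finset.mem_filter.mpr ⟨hcr, hge⟩
      have hdisjA : (↑𝒜 : Set (Finset ℕ)).PairwiseDisjoint (fun A => Nl γ ⁻¹' {n} ∩
          {ω | (Finset.range n).filter (fun c => killSum m γ ≤ T γ c ω) = A}) := by
        intro A _ B _ hAB
        refine Set.disjoint_left.mpr ?_
        rintro ω ⟨-, h1⟩ ⟨-, h2⟩
        exact hAB (h1.symm.trans h2)
      have hmeasEA : ∀ A ∈ 𝒜, MeasurableSet (Nl γ ⁻¹' {n} ∩
          {ω | (Finset.range n).filter (fun c => killSum m γ ≤ T γ c ω) = A}) := by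
        intro A hAmem
        rw [hinterA A hAmem]
        refine Finset.measurableSet_biInter _ fun i hi => hmixmeas i ?_
        rcases i with γ' | ⟨γ', c⟩
        · exact measurableSet_singleton n
        · show MeasurableSet[_]
            (if c ∈ A then Set.Ici (killSum m γ) else Set.Iio (killSum m γ))
          split
          · exact (measurableSet_Ici : MeasurableSet (Set.Ici (killSum m γ)))
          · exact (measurableSet_Iio : MeasurableSet (Set.Iio (killSum m γ)))
      have hPA : ∀ A ∈ 𝒜, P (Nl γ ⁻¹' {n} ∩
          {ω | (Finset.range n).filter (fun c => killSum m γ ≤ T γ c ω) = A})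
          = ENNReal.ofReal (Real.exp (-μ0) * μ0 ^ n / n.factorial) *
            (ENNReal.ofReal p ^ j * ENNReal.ofReal (1 - p) ^ (n - j)) := by
        intro A hAmem
        obtain ⟨hsub, hcard⟩ := Finset.mem_powersetCard.mp (hAdef ▸ hAmem)
        have hmeasA : ∀ i ∈ S, MeasurableSet[mixMS i] (thinSets n (killSum m γ) A i) := by
          rintro (γ' | ⟨γ', c⟩) -
          · exact measurableSet_singleton n
          · show MeasurableSet[_]
              (if c ∈ A then Set.Ici (killSum m γ) else Set.Iio (killSum m γ))
            split
            · exact (measurableSet_Ici : MeasurableSet (Set.Ici (killSum m γ)))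
            · exact (measurableSet_Iio : MeasurableSet (Set.Iio (killSum m γ)))
        have hprod := (iIndepFun_iff_measure_inter_preimage_eq_mul.mp hjoint) S hmeasA
        rw [hinterA A hAmem, hprod, hSdef, Finset.prod_insert hinotin,
          Finset.prod_image (fun x _ y _ hxy => by simpa using hxy)]
        have hterm1 : P (mixF Nl T (Sum.inl γ) ⁻¹' thinSets n (killSum m γ) A (Sum.inl γ))
            = ENNReal.ofReal (Real.exp (-μ0) * μ0 ^ n / n.factorial) := by
          show P (Nl γ ⁻¹' {n}) = _
          rw [← Measure.map_apply (hmeas γ) (measurableSet_singleton n), hN γ,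
            hsingle μ0 hμ0 n]
        have hterm2 : ∀ c ∈ Finset.range n,
            P (mixF Nl T (Sum.inr (γ, c)) ⁻¹' thinSets n (killSum m γ) A (Sum.inr (γ, c)))
            = if c ∈ A then ENNReal.ofReal p else ENNReal.ofReal (1 - p) := by
          intro c _
          show P (T γ c ⁻¹'
            (if c ∈ A then Set.Ici (killSum m γ) else Set.Iio (killSum m γ))) = _
          by_cases hcA : c ∈ A
          · rw [if_pos hcA, if_pos hcA,
              ← Measure.map_apply (hmeasT γ c) measurableSet_Ici, hT γ c, expMeasure_Ici hs0]
          · rw [if_neg hcA, if_neg hcA,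
              ← Measure.map_apply (hmeasT γ c) measurableSet_Iio, hT γ c, expMeasure_Iio hs0]
        rw [hterm1, Finset.prod_congr rfl hterm2]
        congr 1
        rw [← Finset.prod_filter_mul_prod_filter_not (Finset.range n) (· ∈ A)]
        have hfil1 : (Finset.range n).filter (· ∈ A) = A := by
          rw [Finset.filter_mem_eq_inter]
          exact Finset.inter_eq_right.mpr hsub
        have hcard2 : ((Finset.range n).filter (fun c => ¬ c ∈ A)).card = n - j := by
          have htot := Finset.card_filter_add_card_filter_not
            (s := Finset.range n) (p := (· ∈ A))
          rw [hfil1, hcard, Finset.card_range] at htot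
          omega
        congr 1
        · rw [hfil1, Finset.prod_congr rfl fun c hc => if_pos hc, Finset.prod_const, hcard]
        · rw [Finset.prod_congr rfl fun c hc =>
            if_neg (Finset.mem_filter.mp hc).2, Finset.prod_const, hcard2]
      rw [hunion, measure_biUnion_finset hdisjA hmeasEA, Finset.sum_congr rfl hPA,
        Finset.sum_const, hAdef, Finset.card_powersetCard, Finset.card_range, nsmul_eq_mul,
        hfdef]
      rw [ENNReal.ofReal_mul (mul_nonneg (Nat.cast_nonneg _) (by positivity)),
        ENNReal.ofReal_mul (Nat.cast_nonneg _),
        ENNReal.ofReal_mul (pow_nonneg hp0 _),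
        ENNReal.ofReal_pow hp0, ENNReal.ofReal_pow h1p, ENNReal.ofReal_natCast]
      ring
    rw [tsum_congr hstep,
      ← ENNReal.ofReal_tsum_of_nonneg
        (fun n => mul_nonneg (mul_nonneg (Nat.cast_nonneg _) (by positivity))
          (mul_nonneg (pow_nonneg hp0 _) (pow_nonneg h1p _)))
        (poisson_thin_hasSum μ0 p hμ0 hp0 hp1 j).summable,
      (poisson_thin_hasSum μ0 p hμ0 hp0 hp1 j).tsum_eq]


end
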